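/- Let c = 1/2 + (√3/6)·i ∈ ℂ and define S_1, S_2 : ℂ → ℂ by S_1(z) = c·conj(z) and S_2(z) = (1−c)·(conj(z) − 1) + 1 (the two similarities, each with contraction ratio 1/√3, generating the Koch curve). Let K ⊆ ℂ be a nonempty compact set with K = S_1(K) ∪ S_2(K). Then the strong open set condition holds: there exists a nonempty bounded open set O ⊆ ℂ with S_1(O) ∪ S_2(O) ⊆ O, S_1(O) ∩ S_2(O) = ∅, and O ∩ K ≠ ∅. -/

import Mathlib

open Complex

/-- The first Koch similarity `S₁(z) = c·conj(z)` with `c = 1/2 + (√3/6)i`. -/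
noncomputable def kochS₁ (z : ℂ) : ℂ :=
  (1 / 2 + (Real.sqrt 3 / 6 : ℝ) * Complex.I) * (starRingEnd ℂ) z

/-- The second Koch similarity `S₂(z) = (1−c)·(conj(z) − 1) + 1`. -/
noncomputable def kochS₂ (z : ℂ) : ℂ :=
  (1 - (1 / 2 + (Real.sqrt 3 / 6 : ℝ) * Complex.I)) * ((starRingEnd ℂ) z - 1) + 1

lemma kochS₁_re (z : ℂ) : (kochS₁ z).re = z.re / 2 + Real.sqrt 3 / 6 * z.im := by
  simp [kochS₁, Complex.mul_re]
  ring

lemma kochS₁_im (z : ℂ) : (kochS₁ z).im = Real.sqrt 3 / 6 * z.re - z.im / 2 := by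
  simp [kochS₁, Complex.mul_im]
  ring

lemma kochS₂_re (z : ℂ) : (kochS₂ z).re = z.re / 2 + 1 / 2 - Real.sqrt 3 / 6 * z.im := by
  simp [kochS₂, Complex.mul_re]
  ring

lemma kochS₂_im (z : ℂ) : (kochS₂ z).im = Real.sqrt 3 / 6 * (1 - z.re) - z.im / 2 := by
  simp [kochS₂, Complex.mul_im]
  ring

/-- The Koch curve system satisfies the strong open set condition: there is a
nonempty bounded open set `O` with `S₁(O) ∪ S₂(O) ⊆ O`, `S₁(O) ∩ S₂(O) = ∅`
and `O ∩ K ≠ ∅`. -/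
theorem stmt14 (K : Set ℂ) (hKne : K.Nonempty) (hKcpt : IsCompact K)
    (hK : K = kochS₁ '' K ∪ kochS₂ '' K) :
    ∃ O : Set ℂ, O.Nonempty ∧ IsOpen O ∧ Bornology.IsBounded O ∧
      kochS₁ '' O ∪ kochS₂ '' O ⊆ O ∧
      kochS₁ '' O ∩ kochS₂ '' O = ∅ ∧
      (O ∩ K).Nonempty := by
  set s := Real.sqrt 3 with hs_def
  have hs2 : s ^ 2 = 3 := Real.sq_sqrt (by norm_num)
  have hs0 : 0 < s := Real.sqrt_pos.mpr (by norm_num)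
  have hs1 : 1 < s := by nlinarith
  -- the open triangle with vertices 0, 1, 1/2 + (√3/6)i
  set O : Set ℂ := {z : ℂ | 0 < z.im ∧ s * z.im < z.re ∧ s * z.im < 1 - z.re} with hO_def
  -- membership in O from images
  have hS1_mem : ∀ z : ℂ, z ∈ O → kochS₁ z ∈ O := by
    intro z ⟨h1, h2, h3⟩
    refine ⟨?_, ?_, ?_⟩ <;>
      simp only [kochS₁_re, kochS₁_im, ← hs_def] <;> nlinarith
  have hS2_mem : ∀ z : ℂ, z ∈ O → kochS₂ z ∈ O := by
    intro z ⟨h1, h2, h3⟩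
    refine ⟨?_, ?_, ?_⟩ <;>
      simp only [kochS₂_re, kochS₂_im, ← hs_def] <;> nlinarith
  -- the distinguished interior point of K
  have hsubK : kochS₁ '' K ∪ kochS₂ '' K ⊆ K := hK.ge
  have hS1K : ∀ z ∈ K, kochS₁ z ∈ K := fun z hz => hsubK (Set.mem_union_left _ ⟨z, hz, rfl⟩)
  have hS2K : ∀ z ∈ K, kochS₂ z ∈ K := fun z hz => hsubK (Set.mem_union_right _ ⟨z, hz, rfl⟩)
  -- 1 ∈ K via minimal distance argument
  have h1K : (1 : ℂ) ∈ K := by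
    obtain ⟨k, hkK, hkmin⟩ := hKcpt.exists_isMinOn (f := fun z : ℂ => dist z 1) hKne
      ((continuous_id.dist continuous_const).continuousOn)
    have hle : dist k 1 ≤ dist (kochS₂ k) 1 := hkmin (hS2K k hkK)
    have hfac : kochS₂ k - 1
        = (1 - (1 / 2 + (s : ℂ) * Complex.I / 6)) * (starRingEnd ℂ) (k - 1) := by
      simp only [kochS₂, map_sub, map_one]
      push_cast
      ring
    have hnorm : Complex.normSq (kochS₂ k - 1) = (1 / 3) * Complex.normSq (k - 1) := by
      rw [hfac, map_mul, Complex.normSq_conj]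
      have : Complex.normSq (1 - (1 / 2 + (s : ℂ) * Complex.I / 6)) = 1 / 3 := by
        rw [Complex.normSq_apply]
        simp [Complex.div_re, Complex.div_im, Complex.normSq_apply]
        nlinarith
      rw [this]
    have hd1 : dist k 1 ^ 2 = Complex.normSq (k - 1) := by
      rw [Complex.dist_eq, Complex.sq_norm]
    have hd2 : dist (kochS₂ k) 1 ^ 2 = Complex.normSq (kochS₂ k - 1) := by
      rw [Complex.dist_eq, Complex.sq_norm]
    have hdist0 : dist k 1 = 0 := by
      nlinarith [dist_nonneg (x := k) (y := (1 : ℂ)), dist_nonneg (x := kochS₂ k) (y := (1 : ℂ))]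
    have : k = 1 := by rwa [dist_eq_zero] at hdist0
    rwa [← this]
  -- the point z₀ = S₁(S₂(S₂(S₁ 1))) = 4/9 + (√3/9)i lies in O ∩ K
  set z₀ : ℂ := kochS₁ (kochS₂ (kochS₂ (kochS₁ 1))) with hz₀_def
  have hz₀K : z₀ ∈ K := hS1K _ (hS2K _ (hS2K _ (hS1K _ h1K)))
  have hz₀re : z₀.re = 4 / 9 := by
    simp only [hz₀_def, kochS₁_re, kochS₁_im, kochS₂_re, kochS₂_im,
      Complex.one_re, Complex.one_im, ← hs_def]
    nlinarith
  have hz₀im : z₀.im = s / 9 := by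
    simp only [hz₀_def, kochS₁_re, kochS₁_im, kochS₂_re, kochS₂_im,
      Complex.one_re, Complex.one_im, ← hs_def]
    nlinarith
  have hz₀O : z₀ ∈ O := by
    refine ⟨?_, ?_, ?_⟩ <;> simp only [hz₀re, hz₀im] <;> nlinarith
  refine ⟨O, ⟨z₀, hz₀O⟩, ?_, ?_, ?_, ?_, ⟨z₀, hz₀O, hz₀K⟩⟩
  · -- open
    exact ((isOpen_lt continuous_const Complex.continuous_im).inter
      ((isOpen_lt (continuous_const.mul Complex.continuous_im) Complex.continuous_re).inter
        (isOpen_lt (continuous_const.mul Complex.continuous_im)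
          (continuous_const.sub Complex.continuous_re))))
  · -- bounded
    apply Bornology.IsBounded.subset (Metric.isBounded_ball (x := (0 : ℂ)) (r := 2))
    intro z ⟨h1, h2, h3⟩
    rw [Metric.mem_ball, dist_zero_right]
    calc ‖z‖ ≤ |z.re| + |z.im| := Complex.norm_le_abs_re_add_abs_im z
      _ < 2 := by
          rw [abs_of_pos (by nlinarith), abs_of_pos h1]
          nlinarith
  · -- invariance
    rintro w (⟨z, hz, rfl⟩ | ⟨z, hz, rfl⟩)
    · exact hS1_mem z hz
    · exact hS2_mem z hz
  · -- disjointness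
    ext w
    simp only [Set.mem_inter_iff, Set.mem_image, Set.mem_empty_iff_false, iff_false]
    rintro ⟨⟨z₁, hz₁, rfl⟩, z₂, hz₂, heq⟩
    obtain ⟨h1, h2, h3⟩ := hz₁
    obtain ⟨h4, h5, h6⟩ := hz₂
    have hre : (kochS₁ z₁).re = (kochS₂ z₂).re := by rw [heq]
    rw [kochS₁_re, kochS₂_re, ← hs_def] at hre
    nlinarith
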